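/- Let (t_n)_{n≥1} be a strictly decreasing sequence of positive reals with t_n → 0 such that the sequence of differences (t_n − t_{n+1})_{n≥1} is also decreasing, and assume (t_n) ∈ ℓ^{r,∞}(ℕ) for some r > 0. Let r_0 be the infimum of all r > 0 such that (t_n) ∈ ℓ^{r,∞}(ℕ). Then the Minkowski dimension of {t_n : n ≥ 1} equals r_0/(1+r_0). -/

import Mathlib

open MeasureTheory

/-- The `δ`-entropy number `N(E,δ) = #{k ∈ ℕ : E ∩ [kδ,(k+1)δ] ≠ ∅}`. -/
noncomputable def entropyNum (E : Set ℝ) (δ : ℝ) : ℕ :=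
  Set.ncard {k : ℕ | (E ∩ Set.Icc (k * δ) ((k + 1) * δ)).Nonempty}

/-- The (upper) Minkowski dimension of a bounded set `E ⊆ ℝ`. -/
noncomputable def minkowskiDim (E : Set ℝ) : ℝ :=
  sInf {a : ℝ | 0 < a ∧ ∃ C : ℝ, 0 < C ∧
    ∀ δ ∈ Set.Ioc (0 : ℝ) 1, (entropyNum E δ : ℝ) ≤ C * δ ^ (-a)}

/-- A sequence belongs to `ℓ^{r,∞}(ℕ)` if `#{n : |t_n| ≥ δ} ≤ N δ^{-r}` for all `δ > 0`. -/
def memLorentz (r : ℝ) (t : ℕ → ℝ) : Prop :=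
  ∃ N : ℝ, 0 < N ∧ ∀ δ : ℝ, 0 < δ →
    Set.encard {n : ℕ | δ ≤ |t n|} ≤ ENNReal.ofReal (N * δ ^ (-r))

lemma count_seg (t : ℕ → ℝ) (hpos : ∀ n, 0 < t n) (hanti : StrictAnti t)
    (hlim : Filter.Tendsto t Filter.atTop (nhds 0)) (δ : ℝ) (hδ : 0 < δ) :
    ∃ m : ℕ, {n : ℕ | δ ≤ |t n|} = Set.Iio m ∧ t m < δ ∧ ∀ n, n < m → δ ≤ t n := by
  have h : ∃ n, t n < δ := (hlim.eventually (gt_mem_nhds hδ)).exists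
  refine ⟨Nat.find h, ?_, Nat.find_spec h, fun n hn => not_lt.1 (Nat.find_min h hn)⟩
  ext n
  simp only [Set.mem_setOf_eq, Set.mem_Iio, abs_of_pos (hpos n)]
  constructor
  · intro hle
    by_contra hc
    exact absurd (lt_of_le_of_lt (hanti.antitone (not_lt.1 hc)) (Nat.find_spec h)) (not_lt.2 hle)
  · intro hn
    exact not_lt.1 (Nat.find_min h hn)

lemma encard_Iio (m : ℕ) : Set.encard (Set.Iio m) = m := by
  rw [← Finset.coe_Iio, Set.encard_coe_eq_coe_finsetCard, Nat.card_Iio]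

lemma entropy_finite (t : ℕ → ℝ) (hanti : StrictAnti t) (δ : ℝ) (hδ : 0 < δ) :
    {k : ℕ | (Set.range t ∩ Set.Icc (k * δ) ((k + 1) * δ)).Nonempty}.Finite := by
  apply Set.Finite.subset (Set.finite_Iic ⌊t 0 / δ⌋₊)
  rintro k ⟨x, ⟨⟨n, rfl⟩, hx1, _⟩⟩
  have h1 : t n ≤ t 0 := hanti.antitone (Nat.zero_le n)
  have : (k : ℝ) ≤ t 0 / δ := by
    rw [le_div_iff₀ hδ]; exact hx1.trans h1
  exact Set.mem_Iic.2 (Nat.le_floor this)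

lemma upper_bound (t : ℕ → ℝ) (hpos : ∀ n, 0 < t n) (hanti : StrictAnti t)
    (hlim : Filter.Tendsto t Filter.atTop (nhds 0)) (r : ℝ) (hr : 0 < r)
    (hmem : memLorentz r t) :
    ∃ C : ℝ, 0 < C ∧ ∀ δ ∈ Set.Ioc (0:ℝ) 1,
      (entropyNum (Set.range t) δ : ℝ) ≤ C * δ ^ (-(r / (1 + r))) := by
  obtain ⟨N, hN, hNb⟩ := hmem
  have h1r : (0:ℝ) < 1 + r := by linarith
  set a := r / (1 + r) with ha_def
  have ha : 0 < a := div_pos hr h1r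
  refine ⟨2 * N + 2, by linarith, ?_⟩
  rintro δ ⟨hδ0, hδ1⟩
  set T := δ ^ ((1 + r)⁻¹) with hT_def
  have hT0 : 0 < T := Real.rpow_pos_of_pos hδ0 _
  obtain ⟨m, hmset, hmlt, hmge⟩ := count_seg t hpos hanti hlim T hT0
  -- m ≤ N * T ^ (-r)
  have hmN : (m : ℝ) ≤ N * T ^ (-r) := by
    have h := hNb T hT0
    rw [hmset, encard_Iio] at h
    have h2 : ((m : ENNReal)) ≤ ENNReal.ofReal (N * T ^ (-r)) := by exact_mod_cast h
    rw [← ENNReal.ofReal_natCast] at h2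
    exact (ENNReal.ofReal_le_ofReal_iff (by positivity)).1 h2
  -- the covering finset
  set f1 : ℕ → ℕ := fun n => ⌊t n / δ⌋₊ with hf1
  set F : Finset ℕ := (Finset.range (⌊T / δ⌋₊ + 1) ∪ (Finset.range m).image f1) ∪
      (Finset.range m).image (fun n => f1 n - 1) with hF
  have hsub : {k : ℕ | (Set.range t ∩ Set.Icc (k * δ) ((k + 1) * δ)).Nonempty} ⊆ ↑F := by
    rintro k ⟨x, ⟨n, rfl⟩, h1, h2⟩
    simp only [hF, Finset.coe_union, Set.mem_union, Finset.mem_coe, Finset.mem_range,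
      Finset.mem_image, Finset.mem_union, Finset.mem_range]
    rcases lt_or_ge (t n) T with hc | hc
    · left; left
      have : (k : ℝ) ≤ T / δ := by
        rw [le_div_iff₀ hδ0]; exact h1.trans hc.le
      exact Nat.lt_succ_of_le (Nat.le_floor this)
    · have hnm : n < m := by
        have : n ∈ {n : ℕ | T ≤ |t n|} := by
          simp only [Set.mem_setOf_eq, abs_of_pos (hpos n)]; exact hc
        rwa [hmset, Set.mem_Iio] at this
      have hkK : k ≤ f1 n := by
        apply Nat.le_floor
        rw [le_div_iff₀ hδ0]; exact h1
      have hKk : f1 n ≤ k + 1 := by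
        have hx : t n / δ ≤ ((k + 1 : ℕ) : ℝ) := by
          rw [div_le_iff₀ hδ0]; push_cast; exact h2
        calc f1 n ≤ ⌊((k + 1 : ℕ) : ℝ)⌋₊ := Nat.floor_le_floor hx
          _ = k + 1 := Nat.floor_natCast _
      rcases Nat.eq_or_lt_of_le hkK with hEq | hLt
      · left; right; exact ⟨n, hnm, hEq.symm⟩
      · right; exact ⟨n, hnm, by omega⟩
  have hcard : (entropyNum (Set.range t) δ : ℝ) ≤ (⌊T / δ⌋₊ + 1 : ℕ) + 2 * m := by
    have h1 : entropyNum (Set.range t) δ ≤ F.card := by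
      rw [entropyNum, ← Set.ncard_coe_finset F]
      exact Set.ncard_le_ncard hsub F.finite_toSet
    have h2 : F.card ≤ (⌊T / δ⌋₊ + 1) + m + m := by
      calc F.card ≤ (Finset.range (⌊T / δ⌋₊ + 1) ∪ (Finset.range m).image f1).card
            + ((Finset.range m).image (fun n => f1 n - 1)).card := Finset.card_union_le _ _
        _ ≤ (Finset.range (⌊T / δ⌋₊ + 1)).card + ((Finset.range m).image f1).card
            + ((Finset.range m).image (fun n => f1 n - 1)).card := by
              exact add_le_add_left (Finset.card_union_le _ _) _
        _ ≤ (⌊T / δ⌋₊ + 1) + m + m := by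
              simp only [Finset.card_range]
              exact add_le_add (add_le_add_right ((Finset.card_image_le).trans
                (by simp)) _) ((Finset.card_image_le).trans (by simp))
    have := h1.trans h2
    push_cast
    exact_mod_cast by push_cast at this ⊢; linarith
  -- rpow computations
  have hTd : T / δ = δ ^ (-a) := by
    rw [hT_def]
    nth_rewrite 2 [← Real.rpow_one δ]
    rw [← Real.rpow_sub hδ0]
    rw [ha_def]
    field_simp
    congr 1; ring
  have hTr : T ^ (-r) = δ ^ (-a) := by
    rw [hT_def, ← Real.rpow_mul hδ0.le]
    congr 1
    rw [ha_def, div_eq_mul_inv]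
    ring
  have hone : 1 ≤ δ ^ (-a) :=
    Real.one_le_rpow_of_pos_of_le_one_of_nonpos hδ0 hδ1 (by linarith)
  have hfloor : ((⌊T / δ⌋₊ : ℝ)) ≤ δ ^ (-a) :=
    (Nat.floor_le (by positivity)).trans (le_of_eq hTd)
  rw [hTr] at hmN
  push_cast at hcard
  linarith

lemma entropy_ge (t : ℕ → ℝ) (hpos : ∀ n, 0 < t n) (hanti : StrictAnti t)
    (hdiff : Antitone fun n : ℕ => t n - t (n + 1)) (k : ℕ) (δ : ℝ) (hδ0 : 0 < δ)
    (hδd : δ ≤ t k - t (k + 1)) :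
    k + 2 ≤ 2 * entropyNum (Set.range t) δ := by
  set M : ℕ := (k + 1) / 2 + 1 with hM
  set g : ℕ → ℕ := fun j => ⌊t (2 * j) / δ⌋₊ with hg
  have hgap : ∀ i, i ≤ k → δ ≤ t i - t (i + 1) := fun i hi => hδd.trans (hdiff hi)
  have hsa : StrictAntiOn g (Set.Iio M) := by
    intro j hj j' hj' hjj
    simp only [Set.mem_Iio] at hj hj'
    have hj'1 : 1 ≤ j' := by omega
    have hd1 : δ ≤ t (2 * j' - 2) - t (2 * j' - 2 + 1) := hgap _ (by omega)
    have hd2 : δ ≤ t (2 * j' - 1) - t (2 * j' - 1 + 1) := hgap _ (by omega)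
    have e1 : 2 * j' - 2 + 1 = 2 * j' - 1 := by omega
    have e2 : 2 * j' - 1 + 1 = 2 * j' := by omega
    rw [e1] at hd1; rw [e2] at hd2
    have hmono : t (2 * j' - 2) ≤ t (2 * j) := hanti.antitone (by omega)
    have hdist : t (2 * j') + 2 * δ ≤ t (2 * j) := by linarith
    have hdiv : t (2 * j') / δ + 2 ≤ t (2 * j) / δ := by
      rw [le_div_iff₀ hδ0, add_mul, div_mul_cancel₀ _ (ne_of_gt hδ0)]
      linarith
    have hfl : g j' + 2 ≤ g j := by
      have h0 : (0:ℝ) ≤ t (2 * j') / δ := le_of_lt (div_pos (hpos _) hδ0)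
      calc g j' + 2 = ⌊t (2 * j') / δ + (2:ℕ)⌋₊ := (Nat.floor_add_natCast h0 2).symm
        _ ≤ ⌊t (2 * j) / δ⌋₊ := Nat.floor_le_floor (by push_cast; exact hdiv)
        _ = g j := rfl
    omega
  have himg : g '' Set.Iio M ⊆
      {k : ℕ | (Set.range t ∩ Set.Icc (k * δ) ((k + 1) * δ)).Nonempty} := by
    rintro _ ⟨j, _, rfl⟩
    refine ⟨t (2 * j), ⟨2 * j, rfl⟩, ?_, ?_⟩
    · rw [← le_div_iff₀ hδ0]
      exact Nat.floor_le (le_of_lt (div_pos (hpos _) hδ0))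
    · rw [← div_le_iff₀ hδ0]
      exact le_of_lt (Nat.lt_floor_add_one _)
  have hcount : M ≤ entropyNum (Set.range t) δ := by
    calc M = (Set.Iio M).ncard := by rw [← Finset.coe_Iio, Set.ncard_coe_finset, Nat.card_Iio]
      _ = (g '' Set.Iio M).ncard := (Set.ncard_image_of_injOn hsa.injOn).symm
      _ ≤ _ := Set.ncard_le_ncard himg (entropy_finite t hanti δ hδ0)
  omega

lemma rpow_diff_ge (s : ℝ) (hs : 0 < s) (x : ℝ) (hx : 1 ≤ x) :
    s * (x + 1) ^ (-(s + 1)) ≤ x ^ (-s) - (x + 1) ^ (-s) := by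
  have hx0 : 0 < x := lt_of_lt_of_le one_pos hx
  obtain ⟨c, hc, hceq⟩ := exists_hasDerivAt_eq_slope (fun u => u ^ (-s))
    (fun u => (-s) * u ^ (-s - 1)) (by linarith : x < x + 1)
    (fun u hu => (Real.continuousAt_rpow_const u (-s)
      (Or.inl (by rintro rfl; exact absurd hu.1 (by linarith)))).continuousWithinAt)
    (fun u hu => Real.hasDerivAt_rpow_const (Or.inl (by rintro rfl; exact absurd hu.1 (by linarith))))
  have hc0 : 0 < c := lt_trans hx0 hc.1
  simp only [add_sub_cancel_left, div_one] at hceq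
  have h1 : x ^ (-s) - (x + 1) ^ (-s) = s * c ^ (-s - 1) := by linarith [hceq]
  have h2 : (x + 1) ^ (-s - 1) ≤ c ^ (-s - 1) :=
    Real.rpow_le_rpow_of_nonpos hc0 hc.2.le (by linarith)
  have e : -(s + 1) = -s - 1 := by ring
  rw [e, h1]
  exact mul_le_mul_of_nonneg_left h2 hs.le

lemma tail_sum (s : ℝ) (hs : 0 < s) (m : ℕ) (n : ℕ) :
    ∑ i ∈ Finset.range n, ((m : ℝ) + i + 2) ^ (-(s + 1)) ≤ s⁻¹ * ((m : ℝ) + 1) ^ (-s) := by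
  set f : ℕ → ℝ := fun i => ((m : ℝ) + 1 + i) ^ (-s) with hf
  have key : ∀ i ∈ Finset.range n,
      ((m : ℝ) + i + 2) ^ (-(s + 1)) ≤ s⁻¹ * (f i - f (i + 1)) := by
    intro i _
    have h := rpow_diff_ge s hs ((m : ℝ) + 1 + i) (by
      have h1 : (0:ℝ) ≤ (m:ℝ) := Nat.cast_nonneg m
      have h2 : (0:ℝ) ≤ (i:ℝ) := Nat.cast_nonneg i
      linarith)
    have e1 : (m : ℝ) + 1 + i + 1 = (m : ℝ) + i + 2 := by ring
    rw [e1] at h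
    have e2 : f (i + 1) = ((m : ℝ) + i + 2) ^ (-s) := by
      simp only [hf]; push_cast; ring_nf
    have e3 : f i = ((m : ℝ) + 1 + i) ^ (-s) := rfl
    rw [e2, e3, le_inv_mul_iff₀ hs]
    exact h
  calc ∑ i ∈ Finset.range n, ((m : ℝ) + i + 2) ^ (-(s + 1))
      ≤ ∑ i ∈ Finset.range n, s⁻¹ * (f i - f (i + 1)) := Finset.sum_le_sum key
    _ = s⁻¹ * ∑ i ∈ Finset.range n, (f i - f (i + 1)) := by rw [Finset.mul_sum]
    _ = s⁻¹ * (f 0 - f n) := by rw [Finset.sum_range_sub']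
    _ ≤ s⁻¹ * f 0 := by
        apply mul_le_mul_of_nonneg_left _ (inv_nonneg.2 hs.le)
        have : (0:ℝ) ≤ f n := Real.rpow_nonneg (by positivity) _
        linarith
    _ = s⁻¹ * ((m : ℝ) + 1) ^ (-s) := by simp [hf]

lemma gap_bound (t : ℕ → ℝ) (hpos : ∀ n, 0 < t n) (hanti : StrictAnti t)
    (hdiff : Antitone fun n : ℕ => t n - t (n + 1)) (a C : ℝ) (ha0 : 0 < a) (hC : 0 < C)
    (hent : ∀ δ ∈ Set.Ioc (0:ℝ) 1, (entropyNum (Set.range t) δ : ℝ) ≤ C * δ ^ (-a)) (k : ℕ) :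
    t k - t (k + 1) ≤ (max (t 0 - t 1) 1 * (2 * C) ^ a⁻¹) * ((k : ℝ) + 2) ^ (-a⁻¹) := by
  set d := t k - t (k + 1) with hd
  have hd0 : 0 < d := sub_pos.2 (hanti (lt_add_one k))
  set δ' := min d 1 with hδ'
  have hδ'0 : 0 < δ' := lt_min hd0 one_pos
  have hδ'1 : δ' ≤ 1 := min_le_right _ _
  have hkey : ((k : ℝ) + 2) ≤ 2 * (C * δ' ^ (-a)) := by
    have h1 := hent δ' ⟨hδ'0, hδ'1⟩
    have h2 := entropy_ge t hpos hanti hdiff k δ' hδ'0 (min_le_left _ _)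
    have h2' : ((k : ℝ) + 2) ≤ 2 * (entropyNum (Set.range t) δ' : ℝ) := by exact_mod_cast h2
    linarith
  have hpa : 0 < δ' ^ a := Real.rpow_pos_of_pos hδ'0 _
  have h2 : ((k : ℝ) + 2) * δ' ^ a ≤ 2 * C := by
    have h3 := mul_le_mul_of_nonneg_right hkey hpa.le
    rwa [mul_assoc, mul_assoc, ← Real.rpow_add hδ'0, neg_add_cancel, Real.rpow_zero,
      mul_one] at h3
  have h4 : δ' ^ a ≤ (2 * C) / ((k : ℝ) + 2) := by
    rw [le_div_iff₀ (by positivity)]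
    linarith
  have h5 : δ' ≤ ((2 * C) / ((k : ℝ) + 2)) ^ a⁻¹ := by
    have h6 := Real.rpow_le_rpow (Real.rpow_nonneg hδ'0.le a) h4 (inv_nonneg.2 ha0.le)
    rwa [← Real.rpow_mul hδ'0.le, mul_inv_cancel₀ (ne_of_gt ha0), Real.rpow_one] at h6
  have h6 : ((2 * C) / ((k : ℝ) + 2)) ^ a⁻¹ = (2 * C) ^ a⁻¹ * ((k : ℝ) + 2) ^ (-a⁻¹) := by
    rw [Real.div_rpow (by positivity) (by positivity), Real.rpow_neg (by positivity),
      div_eq_mul_inv]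
  have h7 : d ≤ max (t 0 - t 1) 1 * δ' := by
    rcases le_or_gt d 1 with h | h
    · rw [hδ', min_eq_left h]
      exact le_mul_of_one_le_left hd0.le (le_max_right _ _)
    · rw [hδ', min_eq_right h.le, mul_one]
      exact le_trans (hdiff (Nat.zero_le k)) (le_max_left _ _)
  calc d ≤ max (t 0 - t 1) 1 * δ' := h7
    _ ≤ max (t 0 - t 1) 1 * ((2 * C) ^ a⁻¹ * ((k : ℝ) + 2) ^ (-a⁻¹)) := by
        apply mul_le_mul_of_nonneg_left _ (le_trans zero_le_one (le_max_right _ _))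
        rw [← h6]; exact h5
    _ = (max (t 0 - t 1) 1 * (2 * C) ^ a⁻¹) * ((k : ℝ) + 2) ^ (-a⁻¹) := by ring

lemma t_bound (t : ℕ → ℝ) (hlim : Filter.Tendsto t Filter.atTop (nhds 0))
    (K s : ℝ) (hK : 0 < K) (hs : 0 < s)
    (hgap : ∀ k : ℕ, t k - t (k + 1) ≤ K * ((k : ℝ) + 2) ^ (-(s + 1))) (m : ℕ) :
    t m ≤ K * s⁻¹ * ((m : ℝ) + 1) ^ (-s) := by
  have key : ∀ n : ℕ, t m - t (m + n) ≤ K * s⁻¹ * ((m : ℝ) + 1) ^ (-s) := by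
    intro n
    have e : t m - t (m + n) = ∑ i ∈ Finset.range n, (t (m + i) - t (m + i + 1)) :=
      (Finset.sum_range_sub' (fun i => t (m + i)) n).symm
    rw [e]
    calc ∑ i ∈ Finset.range n, (t (m + i) - t (m + i + 1))
        ≤ ∑ i ∈ Finset.range n, K * (((m : ℝ) + i) + 2) ^ (-(s + 1)) := by
          apply Finset.sum_le_sum
          intro i _
          have := hgap (m + i)
          rwa [Nat.cast_add] at this
      _ = K * ∑ i ∈ Finset.range n, ((m : ℝ) + i + 2) ^ (-(s + 1)) := by rw [Finset.mul_sum]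
      _ ≤ K * (s⁻¹ * ((m : ℝ) + 1) ^ (-s)) :=
          mul_le_mul_of_nonneg_left (tail_sum s hs m n) hK.le
      _ = K * s⁻¹ * ((m : ℝ) + 1) ^ (-s) := by ring
  have hl : Filter.Tendsto (fun n : ℕ => t (m + n)) Filter.atTop (nhds 0) :=
    hlim.comp (Filter.tendsto_atTop_mono (fun n => Nat.le_add_left n m) Filter.tendsto_id)
  have := ge_of_tendsto' hl (fun n => by linarith [key n] :
    ∀ n : ℕ, t m - K * s⁻¹ * ((m : ℝ) + 1) ^ (-s) ≤ t (m + n))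
  linarith

lemma lorentz_of_bound (t : ℕ → ℝ) (hpos : ∀ n, 0 < t n) (hanti : StrictAnti t)
    (hlim : Filter.Tendsto t Filter.atTop (nhds 0)) (s K' : ℝ) (hs : 0 < s) (hK' : 0 < K')
    (hb : ∀ m : ℕ, t m ≤ K' * ((m : ℝ) + 1) ^ (-s)) : memLorentz s⁻¹ t := by
  refine ⟨max (K' ^ s⁻¹) 1, lt_of_lt_of_le one_pos (le_max_right _ _), ?_⟩
  intro δ hδ
  obtain ⟨m, hset, _, hge⟩ := count_seg t hpos hanti hlim δ hδ
  rw [hset, encard_Iio]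
  suffices h : (m : ℝ) ≤ max (K' ^ s⁻¹) 1 * δ ^ (-s⁻¹) by
    have h2 := ENNReal.ofReal_le_ofReal h
    rw [ENNReal.ofReal_natCast] at h2
    exact_mod_cast h2
  rcases Nat.eq_zero_or_pos m with rfl | hm
  · simp only [Nat.cast_zero]
    positivity
  · obtain ⟨p, rfl⟩ : ∃ p, m = p + 1 := ⟨m - 1, by omega⟩
    set x : ℝ := (p : ℝ) + 1 with hx
    have hx0 : (0 : ℝ) < x := by positivity
    have hδp : δ ≤ K' * x ^ (-s) := le_trans (hge p (by omega)) (hb p)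
    have hxs : 0 < x ^ s := Real.rpow_pos_of_pos hx0 _
    have h1 : δ * x ^ s ≤ K' := by
      have h2 := mul_le_mul_of_nonneg_right hδp hxs.le
      rwa [mul_assoc, ← Real.rpow_add hx0, neg_add_cancel, Real.rpow_zero, mul_one] at h2
    have h2 : x ^ s ≤ K' / δ := by
      rw [le_div_iff₀ hδ]
      linarith [mul_comm δ (x ^ s)]
    have h3 : x ≤ (K' / δ) ^ s⁻¹ := by
      have h4 := Real.rpow_le_rpow (Real.rpow_nonneg hx0.le s) h2 (inv_nonneg.2 hs.le)
      rwa [← Real.rpow_mul hx0.le, mul_inv_cancel₀ (ne_of_gt hs), Real.rpow_one] at h4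
    have h4 : (K' / δ) ^ s⁻¹ = K' ^ s⁻¹ * δ ^ (-s⁻¹) := by
      rw [Real.div_rpow hK'.le hδ.le, Real.rpow_neg hδ.le, div_eq_mul_inv]
    have h5 : ((p : ℝ) + 1 : ℝ) ≤ max (K' ^ s⁻¹) 1 * δ ^ (-s⁻¹) := by
      apply le_trans (h3.trans_eq h4)
      exact mul_le_mul_of_nonneg_right (le_max_left _ _) (Real.rpow_nonneg hδ.le _)
    push_cast
    exact h5

lemma frac_mono {x y : ℝ} (hx : 0 ≤ x) (hxy : x ≤ y) : x / (1 + x) ≤ y / (1 + y) := by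
  rw [div_le_div_iff₀ (by linarith) (by linarith)]
  nlinarith

lemma frac_lip {x y : ℝ} (hx : 0 ≤ x) (hxy : x ≤ y) : y / (1 + y) ≤ x / (1 + x) + (y - x) := by
  have h1 : (0:ℝ) < 1 + x := by linarith
  have h2 : (0:ℝ) < 1 + y := by linarith
  have key : y / (1 + y) - x / (1 + x) = (y - x) / ((1 + x) * (1 + y)) := by
    field_simp
    ring
  have h3 : (y - x) / ((1 + x) * (1 + y)) ≤ (y - x) := by
    apply div_le_self (by linarith)
    nlinarith
  linarith

theorem stmt7 (t : ℕ → ℝ) (hpos : ∀ n, 0 < t n) (hanti : StrictAnti t)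
    (hlim : Filter.Tendsto t Filter.atTop (nhds 0))
    (hdiff : Antitone fun n : ℕ => t n - t (n + 1))
    (hlor : ∃ r : ℝ, 0 < r ∧ memLorentz r t) :
    minkowskiDim (Set.range t) =
      sInf {r : ℝ | 0 < r ∧ memLorentz r t} /
        (1 + sInf {r : ℝ | 0 < r ∧ memLorentz r t}) := by
  classical
  set S := {r : ℝ | 0 < r ∧ memLorentz r t} with hS
  have hS_ne : S.Nonempty := hlor
  have hS_bdd : BddBelow S := ⟨0, fun r hr => hr.1.le⟩
  set ρ := sInf S with hρ
  have hρ0 : 0 ≤ ρ := Real.sInf_nonneg (fun r hr => hr.1.le)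
  have h1ρ : (0:ℝ) < 1 + ρ := by linarith
  rw [minkowskiDim]
  set A := {a : ℝ | 0 < a ∧ ∃ C : ℝ, 0 < C ∧
    ∀ δ ∈ Set.Ioc (0 : ℝ) 1, (entropyNum (Set.range t) δ : ℝ) ≤ C * δ ^ (-a)} with hA
  have hA_mem : ∀ r ∈ S, r / (1 + r) ∈ A := by
    intro r hr
    obtain ⟨C, hC, hb⟩ := upper_bound t hpos hanti hlim r hr.1 hr.2
    exact ⟨div_pos hr.1 (by linarith [hr.1]), C, hC, hb⟩
  have hA_ne : A.Nonempty := by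
    obtain ⟨r, hr⟩ := hlor
    exact ⟨_, hA_mem r hr⟩
  have hA_bdd : BddBelow A := ⟨0, fun a ha => ha.1.le⟩
  have hlow : ρ / (1 + ρ) ≤ sInf A := by
    apply le_csInf hA_ne
    intro a ha
    obtain ⟨ha0, C, hC, hent⟩ := ha
    rcases lt_or_ge a 1 with ha1 | ha1
    · set s := a⁻¹ - 1 with hs_def
      have hainv : 1 < a⁻¹ := (one_lt_inv₀ ha0).2 ha1
      have hs : 0 < s := by simp only [hs_def]; linarith
      have hK : 0 < max (t 0 - t 1) 1 * (2 * C) ^ a⁻¹ := by positivity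
      have hgap' : ∀ k : ℕ, t k - t (k + 1) ≤
          (max (t 0 - t 1) 1 * (2 * C) ^ a⁻¹) * ((k : ℝ) + 2) ^ (-(s + 1)) := by
        intro k
        have h := gap_bound t hpos hanti hdiff a C ha0 hC hent k
        have e : -(s + 1) = -a⁻¹ := by rw [hs_def]; ring
        rwa [e]
      have htb := t_bound t hlim _ s hK hs hgap'
      have hmem := lorentz_of_bound t hpos hanti hlim s _ hs (by positivity) htb
      have hSin : s⁻¹ ∈ S := ⟨inv_pos.2 hs, hmem⟩
      have hρs : ρ ≤ s⁻¹ := csInf_le hS_bdd hSin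
      have hfm : ρ / (1 + ρ) ≤ s⁻¹ / (1 + s⁻¹) := frac_mono hρ0 hρs
      have heq : s⁻¹ / (1 + s⁻¹) = a := by
        have h1a : (1:ℝ) - a ≠ 0 := ne_of_gt (by linarith)
        have ha' : a ≠ 0 := ne_of_gt ha0
        have e0 : a⁻¹ - 1 = (1 - a) / a := by field_simp
        rw [hs_def, e0, inv_div]
        rw [show 1 + a / (1 - a) = 1 / (1 - a) by field_simp; ring]
        field_simp
      linarith
    · have : ρ / (1 + ρ) < 1 := by
        rw [div_lt_one h1ρ]; linarith
      linarith
  have hup : sInf A ≤ ρ / (1 + ρ) := by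
    apply le_of_forall_pos_le_add
    intro ε hε
    obtain ⟨r, hrS, hrρ⟩ := Real.lt_sInf_add_pos hS_ne hε
    have hrρ' : ρ ≤ r := csInf_le hS_bdd hrS
    have h1 : sInf A ≤ r / (1 + r) := csInf_le hA_bdd (hA_mem r hrS)
    have h2 : r / (1 + r) ≤ ρ / (1 + ρ) + (r - ρ) := frac_lip hρ0 hrρ'
    have : r - ρ ≤ ε := by rw [hρ] at *; linarith
    linarith
  linarith [le_antisymm hup hlow]
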